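/- Let n ≥ 4 and s ≥ 1. Then monomials U, V belong to F(J(P_{n−3})^s) if and only if x_n^s x_{n−2}^s·U and x_n^s x_{n−2}^s·V belong to F(J(P_n)^s). Moreover, in that case: (1) U >_R V in the rooted order on F(J(P_{n−3})^s) if and only if x_n^s x_{n−2}^s·U >_R x_n^s x_{n−2}^s·V in the rooted order on F(J(P_n)^s); and (2) U ∈ G(J(P_{n−3})^s) if and only if x_n^s x_{n−2}^s·U ∈ G(J(P_n)^s). -/

import Mathlib

open MvPolynomial

noncomputable section

/-- The cover ideal of the path graph `P_n` on vertices `x_1, …, x_n`: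
the intersection of the ideals `(x_i, x_{i+1})` over the edges of the path. -/
def pathCoverIdeal (k : Type*) [Field k] (n : ℕ) : Ideal (MvPolynomial ℕ k) :=
  ⨅ i ∈ Finset.Icc 1 (n - 1), Ideal.span {(X i : MvPolynomial ℕ k), X (i + 1)}

/-- A monomial with coefficient `1`. -/
def IsMonomial {k : Type*} [Field k] (m : MvPolynomial ℕ k) : Prop :=
  ∃ a : ℕ →₀ ℕ, m = monomial a 1

/-- The minimal monomial generating set `G(I)` of a monomial ideal `I`:
monomials of `I` that are not strictly divisible by another monomial of `I`. -/
def minGens {k : Type*} [Field k] (I : Ideal (MvPolynomial ℕ k)) :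
    Set (MvPolynomial ℕ k) :=
  {m | IsMonomial m ∧ m ∈ I ∧ ∀ m', IsMonomial m' → m' ∈ I → m' ∣ m → m' = m}

/-- The rooted list `R(P_n)` of the path `P_n`. -/
def rootedList (k : Type*) [Field k] : ℕ → List (MvPolynomial ℕ k)
  | 0 => [1]
  | 1 => [1]
  | 2 => [X 1, X 2]
  | 3 => [X 2, X 1 * X 3]
  | (n + 4) =>
      ((rootedList k (n + 2)).map fun u => X (n + 3) * u) ++
      ((rootedList k (n + 1)).map fun u => X (n + 4) * X (n + 2) * u)

/-- `F(I^s)`: the set of `s`-fold products of minimal generators of `I`. -/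
def sFold {k : Type*} [Field k] (I : Ideal (MvPolynomial ℕ k)) (s : ℕ) :
    Set (MvPolynomial ℕ k) :=
  {m | ∃ L : List (MvPolynomial ℕ k), L.length = s ∧ (∀ u ∈ L, u ∈ minGens I) ∧ m = L.prod}

/-- `a >_lex b`: the first entry where `a` and `b` differ is bigger in `a`. -/
def lexGt (a b : ℕ → ℕ) : Prop :=
  ∃ t, (∀ j, j < t → a j = b j) ∧ b t < a t

/-- `a` is an exponent-vector expression of `M` as an `s`-fold product of the terms of
the list `L`. -/
def IsExprOn {k : Type*} [Field k] (L : List (MvPolynomial ℕ k)) (s : ℕ) (a : ℕ → ℕ)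
    (M : MvPolynomial ℕ k) : Prop :=
  (∀ i, L.length ≤ i → a i = 0) ∧ (∑ i ∈ Finset.range L.length, a i) = s ∧
    M = ∏ i ∈ Finset.range L.length, (L.getD i 1) ^ (a i)

/-- `a` is the (lexicographically) maximal expression of `M` as an `s`-fold product of
the terms of the list `L`. -/
def IsMaxExpr {k : Type*} [Field k] (L : List (MvPolynomial ℕ k)) (s : ℕ) (a : ℕ → ℕ)
    (M : MvPolynomial ℕ k) : Prop :=
  IsExprOn L s a M ∧ ∀ b, IsExprOn L s b M → b ≠ a → lexGt a b

/-- The rooted order `M >_R N` on `s`-fold products, relative to the list `L` of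
minimal generators: maximal expressions are compared lexicographically. -/
def rootedGt {k : Type*} [Field k] (L : List (MvPolynomial ℕ k)) (s : ℕ)
    (M N : MvPolynomial ℕ k) : Prop :=
  ∃ a b, IsMaxExpr L s a M ∧ IsMaxExpr L s b N ∧ lexGt a b

/-- An ideal is generated by a subset of the variables. -/
def genByVars {k : Type*} [Field k] (I : Ideal (MvPolynomial ℕ k)) : Prop :=
  ∃ T : Set ℕ, I = Ideal.span ((fun i => (X i : MvPolynomial ℕ k)) '' T)

end

namespace PureSFold
open MvPolynomial

variable {k : Type*} [Field k]

def Cov (N : ℕ) (d : ℕ →₀ ℕ) : Prop :=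
  ∀ i ∈ Finset.Icc 1 (N - 1), d i ≠ 0 ∨ d (i + 1) ≠ 0

def MinCov (N : ℕ) (d : ℕ →₀ ℕ) : Prop :=
  Cov N d ∧ ∀ e, e ≤ d → Cov N e → e = d

lemma mem_pathCoverIdeal_iff {N : ℕ} {p : MvPolynomial ℕ k} :
    p ∈ pathCoverIdeal k N ↔ ∀ m ∈ p.support, Cov N m := by
  unfold pathCoverIdeal
  simp only [Ideal.mem_iInf]
  constructor
  · intro h m hm i hi
    have h2 := h i hi
    rw [show ({(X i : MvPolynomial ℕ k), X (i + 1)} : Set _) = X '' {i, i+1} by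
        rw [Set.image_pair], mem_ideal_span_X_image] at h2
    have := h2 m hm
    simp only [Set.mem_insert_iff, Set.mem_singleton_iff] at this
    obtain ⟨j, hj | hj, hj2⟩ := this <;> subst hj
    · exact Or.inl hj2
    · exact Or.inr hj2
  · intro h i hi
    rw [show ({(X i : MvPolynomial ℕ k), X (i + 1)} : Set _) = X '' {i, i+1} by
        rw [Set.image_pair], mem_ideal_span_X_image]
    intro m hm
    rcases h m hm i hi with h' | h'
    · exact ⟨i, by simp, h'⟩
    · exact ⟨i+1, by simp, h'⟩

lemma monomial_mem_pathCoverIdeal_iff {N : ℕ} {d : ℕ →₀ ℕ} :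
    (monomial d 1 : MvPolynomial ℕ k) ∈ pathCoverIdeal k N ↔ Cov N d := by
  rw [mem_pathCoverIdeal_iff]
  simp [support_monomial]

lemma monomial_dvd_monomial_iff {d e : ℕ →₀ ℕ} :
    (monomial d 1 : MvPolynomial ℕ k) ∣ monomial e 1 ↔ d ≤ e := by
  rw [monomial_dvd_monomial]
  simp

lemma monomial_inj {d e : ℕ →₀ ℕ} (h : (monomial d 1 : MvPolynomial ℕ k) = monomial e 1) :
    d = e :=
  monomial_left_injective (one_ne_zero) h

lemma mem_minGens_pathCoverIdeal_iff {N : ℕ} {m : MvPolynomial ℕ k} :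
    m ∈ minGens (pathCoverIdeal k N) ↔ ∃ d, MinCov N d ∧ m = monomial d 1 := by
  constructor
  · rintro ⟨⟨d, rfl⟩, hmem, hmin⟩
    refine ⟨d, ⟨monomial_mem_pathCoverIdeal_iff.1 hmem, ?_⟩, rfl⟩
    intro e he hce
    exact monomial_inj (hmin (monomial e 1) ⟨e, rfl⟩
      (monomial_mem_pathCoverIdeal_iff.2 hce) (monomial_dvd_monomial_iff.2 he))
  · rintro ⟨d, ⟨hc, hmin⟩, rfl⟩
    refine ⟨⟨d, rfl⟩, monomial_mem_pathCoverIdeal_iff.2 hc, ?_⟩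
    rintro m' ⟨e, rfl⟩ hmem hdvd
    rw [hmin e (monomial_dvd_monomial_iff.1 hdvd) (monomial_mem_pathCoverIdeal_iff.1 hmem)]


/-- the extra factor `x_{m+2} x_{m+4}` as an exponent vector -/
noncomputable def dd (m : ℕ) : ℕ →₀ ℕ := Finsupp.single (m+2) 1 + Finsupp.single (m+4) 1

lemma dd_apply (m j : ℕ) :
    dd m j = (if j = m+2 then 1 else 0) + (if j = m+4 then 1 else 0) := by
  simp [dd, Finsupp.single_apply, eq_comm]

lemma dd_apply_small (m j : ℕ) (h : j ≤ m+1) : dd m j = 0 := by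
  rw [dd_apply, if_neg (by omega), if_neg (by omega)]

lemma dd_eval2 (m : ℕ) : dd m (m+2) = 1 := by
  rw [dd_apply, if_pos rfl, if_neg (by omega)]

lemma dd_eval3 (m : ℕ) : dd m (m+3) = 0 := by
  rw [dd_apply, if_neg (by omega), if_neg (by omega)]

lemma dd_eval4 (m : ℕ) : dd m (m+4) = 1 := by
  rw [dd_apply, if_neg (by omega), if_pos rfl]

lemma update_le (d : ℕ →₀ ℕ) (j v : ℕ) (hv : v ≤ d j) : d.update j v ≤ d := by
  rw [Finsupp.le_def]
  intro i
  rcases eq_or_ne i j with rfl | h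
  · simpa [Finsupp.coe_update] using hv
  · simp [Finsupp.coe_update, Function.update_of_ne h]

lemma MinCov.eq_zero_of_removable {N : ℕ} {d : ℕ →₀ ℕ} (h : MinCov N d) (j : ℕ)
    (hrem : Cov N (d.update j 0)) : d j = 0 := by
  have := h.2 _ (update_le d j 0 (Nat.zero_le _)) hrem
  have := congrArg (fun f => f j) this
  simpa [Finsupp.coe_update] using this.symm

lemma MinCov.supp {N : ℕ} {d : ℕ →₀ ℕ} (h : MinCov N d) {j : ℕ}
    (hj : j ∉ Finset.Icc 1 N) : d j = 0 := by
  rw [Finset.mem_Icc] at hj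
  apply h.eq_zero_of_removable
  intro i hi
  rw [Finset.mem_Icc] at hi
  have h1 : i ≠ j := by omega
  have h2 : i + 1 ≠ j := by omega
  have := h.1 i (Finset.mem_Icc.2 hi)
  simpa [Finsupp.coe_update, Function.update_of_ne h1, Function.update_of_ne h2] using this

lemma MinCov.le_one {N : ℕ} {d : ℕ →₀ ℕ} (h : MinCov N d) (j : ℕ) : d j ≤ 1 := by
  by_contra hc
  push_neg at hc
  have hle : d.update j 1 ≤ d := update_le d j 1 (by omega)
  have hcov : Cov N (d.update j 1) := by
    intro i hi
    rcases h.1 i hi with h' | h'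
    · left
      rcases eq_or_ne i j with rfl | hne
      · simp [Finsupp.coe_update]
      · simpa [Finsupp.coe_update, Function.update_of_ne hne] using h'
    · right
      rcases eq_or_ne (i+1) j with he | hne
      · rw [he]; simp [Finsupp.coe_update]
      · simpa [Finsupp.coe_update, Function.update_of_ne hne] using h'
  have := h.2 _ hle hcov
  have := congrArg (fun f => f j) this
  simp [Finsupp.coe_update] at this
  omega

lemma minCov_add (m : ℕ) {e : ℕ →₀ ℕ} (h : MinCov (m+1) e) :
    MinCov (m+4) (e + dd m) := by
  have hsupp : ∀ j, m+1 < j → e j = 0 := fun j hj =>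
    h.supp (by rw [Finset.mem_Icc]; omega)
  constructor
  · intro i hi
    rw [Finset.mem_Icc] at hi
    rcases Nat.lt_or_ge i (m+1) with hlt | hge
    · have := h.1 i (by rw [Finset.mem_Icc]; omega)
      rcases this with h' | h'
      · left; simp only [Finsupp.add_apply]; omega
      · right; simp only [Finsupp.add_apply]; omega
    · rcases Nat.lt_or_ge i (m+3) with h2 | h2
      · -- i = m+1 or m+2 : vertex m+2 works
        rcases Nat.eq_or_lt_of_le hge with rfl | h3
        · right; simp [Finsupp.add_apply, dd_apply]
        · left
          have : i = m + 2 := by omega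
          subst this
          simp [Finsupp.add_apply, dd_apply]
      · -- i = m+3 : vertex m+4
        have : i = m + 3 := by omega
        subst this
        right; simp [Finsupp.add_apply, dd_apply]
  · intro f hle hcov
    have happ := Finsupp.le_def.1 hle
    have hf3 : f (m+3) = 0 := by
      have := happ (m+3)
      have h0 : e (m+3) = 0 := hsupp _ (by omega)
      simp only [Finsupp.add_apply, h0, dd_eval3] at this
      omega
    have hf4 : f (m+4) ≠ 0 := by
      have := hcov (m+3) (by rw [Finset.mem_Icc]; omega)
      rcases this with h' | h'
      · exact absurd hf3 h'
      · exact h'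
    have hf2 : f (m+2) ≠ 0 := by
      have := hcov (m+2) (by rw [Finset.mem_Icc]; omega)
      rcases this with h' | h'
      · exact h'
      · exact absurd hf3 h'
    have hddle : dd m ≤ f := by
      rw [Finsupp.le_def]
      intro i
      rcases eq_or_ne i (m+2) with rfl | h1
      · rw [dd_eval2]; omega
      rcases eq_or_ne i (m+4) with rfl | hx2
      · rw [dd_eval4]; omega
      · rw [dd_apply, if_neg h1, if_neg hx2]; omega
    have hgle : f - dd m ≤ e := by
      rw [Finsupp.le_def]
      intro i
      rw [Finsupp.tsub_apply]
      have := happ i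
      simp only [Finsupp.add_apply] at this
      omega
    have hgcov : Cov (m+1) (f - dd m) := by
      intro i hi
      rw [Finset.mem_Icc] at hi
      have e1 : (f - dd m) i = f i := by
        rw [Finsupp.tsub_apply, dd_apply_small m i (by omega), Nat.sub_zero]
      have e2 : (f - dd m) (i+1) = f (i+1) := by
        rw [Finsupp.tsub_apply, dd_apply_small m (i+1) (by omega), Nat.sub_zero]
      rw [e1, e2]
      exact hcov i (by rw [Finset.mem_Icc]; omega)
    have := h.2 _ hgle hgcov
    have : f - dd m + dd m = e + dd m := by rw [this]
    rwa [tsub_add_cancel_of_le hddle] at this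

lemma minCov_decomp (m : ℕ) {d : ℕ →₀ ℕ} (h : MinCov (m+4) d)
    (h4 : d (m+4) ≠ 0) (h2 : d (m+2) ≠ 0) :
    ∃ e, MinCov (m+1) e ∧ d = e + dd m := by
  have hd3 : d (m+3) = 0 := by
    apply h.eq_zero_of_removable
    intro i hi
    rw [Finset.mem_Icc] at hi
    rcases eq_or_ne i (m+2) with rfl | hi2
    · left; simpa [Finsupp.coe_update, Function.update_of_ne (by omega : m+2 ≠ m+3)] using h2
    rcases eq_or_ne i (m+3) with rfl | hi3
    · right; simpa [Finsupp.coe_update, Function.update_of_ne (by omega : m+4 ≠ m+3)] using h4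
    · have := h.1 i (Finset.mem_Icc.2 hi)
      have hne1 : i ≠ m+3 := hi3
      have hne2 : i + 1 ≠ m+3 := by omega
      simpa [Finsupp.coe_update, Function.update_of_ne hne1, Function.update_of_ne hne2] using this
  have hddle : dd m ≤ d := by
    rw [Finsupp.le_def]
    intro i
    rcases eq_or_ne i (m+2) with rfl | h1
    · rw [dd_eval2]; omega
    rcases eq_or_ne i (m+4) with rfl | hh2
    · rw [dd_eval4]; omega
    · rw [dd_apply, if_neg h1, if_neg hh2]; omega
  refine ⟨d - dd m, ⟨?_, ?_⟩, ?_⟩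
  · intro i hi
    rw [Finset.mem_Icc] at hi
    have e1 : (d - dd m) i = d i := by
      rw [Finsupp.tsub_apply, dd_apply_small m i (by omega), Nat.sub_zero]
    have e2 : (d - dd m) (i+1) = d (i+1) := by
      rw [Finsupp.tsub_apply, dd_apply_small m (i+1) (by omega), Nat.sub_zero]
    rw [e1, e2]
    exact h.1 i (by rw [Finset.mem_Icc]; omega)
  · intro g hgle hgcov
    have hgd : g + dd m ≤ d := by
      rw [Finsupp.le_def]
      intro i
      have := Finsupp.le_def.1 hgle i
      have := Finsupp.le_def.1 hddle i
      rw [Finsupp.tsub_apply] at *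
      simp only [Finsupp.add_apply]
      omega
    have hgcov' : Cov (m+4) (g + dd m) := by
      intro i hi
      rw [Finset.mem_Icc] at hi
      rcases Nat.lt_or_ge i (m+1) with hlt | hge
      · rcases hgcov i (by rw [Finset.mem_Icc]; omega) with h' | h'
        · left; simp only [Finsupp.add_apply]; omega
        · right; simp only [Finsupp.add_apply]; omega
      · rcases Nat.lt_or_ge i (m+3) with hc | hc
        · rcases Nat.eq_or_lt_of_le hge with rfl | h3
          · right; simp [Finsupp.add_apply, dd_apply]
          · left
            have : i = m + 2 := by omega
            subst this
            simp [Finsupp.add_apply, dd_apply]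
        · have : i = m + 3 := by omega
          subst this
          right; simp [Finsupp.add_apply, dd_apply]
    have := h.2 _ hgd hgcov'
    have h' : g + dd m - dd m = d - dd m := by rw [this]
    simpa using h'
  · rw [tsub_add_cancel_of_le hddle]



-- list helpers
lemma list_sum_apply (E : List (ℕ →₀ ℕ)) (j : ℕ) :
    E.sum j = (E.map (fun d => d j)).sum :=
  map_list_sum (Finsupp.applyAddHom j) E

lemma nat_list_sum_zero {L : List ℕ} (h : L.sum = 0) : ∀ x ∈ L, x = 0 := by
  induction L with
  | nil => simp
  | cons a t ih =>
    simp only [List.sum_cons] at h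
    intro x hx
    rcases List.mem_cons.1 hx with rfl | hx
    · omega
    · exact ih (by omega) x hx

lemma nat_list_length_le_sum {L : List ℕ} (h : ∀ x ∈ L, 1 ≤ x) : L.length ≤ L.sum := by
  induction L with
  | nil => simp
  | cons a t ih =>
    simp only [List.sum_cons, List.length_cons]
    have := h a (by simp)
    have := ih (fun x hx => h x (by simp [hx]))
    omega

lemma nat_list_sum_le {L : List ℕ} (h : ∀ x ∈ L, x ≤ 1) : L.sum ≤ L.length := by
  induction L with
  | nil => simp
  | cons a t ih =>
    simp only [List.sum_cons, List.length_cons]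
    have := h a (by simp)
    have := ih (fun x hx => h x (by simp [hx]))
    omega

lemma nat_list_all_one {L : List ℕ} (h : ∀ x ∈ L, x ≤ 1) (h2 : L.length ≤ L.sum) :
    ∀ x ∈ L, x = 1 := by
  induction L with
  | nil => simp
  | cons a t ih =>
    simp only [List.sum_cons, List.length_cons] at h2
    have ha := h a (by simp)
    have hts := nat_list_sum_le (L := t) (fun x hx => h x (by simp [hx]))
    intro x hx
    rcases List.mem_cons.1 hx with rfl | hx
    · omega
    · exact ih (fun y hy => h y (by simp [hy])) (by omega) x hx

lemma sum_map_add (E : List (ℕ →₀ ℕ)) (c : ℕ →₀ ℕ) :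
    (E.map (· + c)).sum = E.sum + E.length • c := by
  induction E with
  | nil => simp
  | cons a t ih =>
    simp only [List.map_cons, List.sum_cons, List.length_cons, ih, succ_nsmul]
    abel

-- monomial algebra
lemma shift_eq (m s : ℕ) (D : ℕ →₀ ℕ) :
    (X (m+4) : MvPolynomial ℕ k) ^ s * X (m+2) ^ s * monomial D 1
      = monomial (D + s • dd m) 1 := by
  rw [X_pow_eq_monomial, X_pow_eq_monomial, monomial_mul, monomial_mul, one_mul, one_mul]
  congr 1
  rw [dd, smul_add, Finsupp.smul_single, Finsupp.smul_single, smul_eq_mul, mul_one]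
  abel

lemma prod_map_monomial (E : List (ℕ →₀ ℕ)) :
    (E.map fun d => (monomial d 1 : MvPolynomial ℕ k)).prod = monomial E.sum 1 := by
  induction E with
  | nil => simp
  | cons a t ih => simp [ih, monomial_mul]

lemma mem_sFold_aux {N : ℕ} (L : List (MvPolynomial ℕ k))
    (hmem : ∀ u ∈ L, u ∈ minGens (pathCoverIdeal k N)) :
    ∃ E : List (ℕ →₀ ℕ), E.length = L.length ∧ (∀ d ∈ E, MinCov N d) ∧
      L.prod = monomial E.sum 1 := by
  induction L with
  | nil => exact ⟨[], by simp, by simp, by simp⟩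
  | cons a t ih =>
    obtain ⟨E, hElen, hEmin, hE⟩ := ih (fun u hu => hmem u (by simp [hu]))
    obtain ⟨d, hd, rfl⟩ := mem_minGens_pathCoverIdeal_iff.1 (hmem a (by simp))
    refine ⟨d :: E, by simp [hElen], ?_, ?_⟩
    · intro e he
      rcases List.mem_cons.1 he with rfl | he
      · exact hd
      · exact hEmin e he
    · simp [hE, monomial_mul]

lemma mem_sFold_iff {N s : ℕ} {U : MvPolynomial ℕ k} :
    U ∈ sFold (pathCoverIdeal k N) s ↔
      ∃ E : List (ℕ →₀ ℕ), E.length = s ∧ (∀ d ∈ E, MinCov N d) ∧ U = monomial E.sum 1 := by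
  constructor
  · rintro ⟨L, hlen, hmem, rfl⟩
    obtain ⟨E, hElen, hEmin, hE⟩ := mem_sFold_aux L hmem
    exact ⟨E, by omega, hEmin, hE⟩
  · rintro ⟨E, hlen, hmin, rfl⟩
    refine ⟨E.map fun d => monomial d 1, by simp [hlen], ?_, (prod_map_monomial E).symm⟩
    intro u hu
    simp only [List.mem_map] at hu
    obtain ⟨d, hd, rfl⟩ := hu
    exact mem_minGens_pathCoverIdeal_iff.2 ⟨d, hmin d hd, rfl⟩

lemma X_pow_mul_ne_zero (m s : ℕ) :
    (X (m+4) : MvPolynomial ℕ k) ^ s * X (m+2) ^ s ≠ 0 :=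
  mul_ne_zero (pow_ne_zero _ (X_ne_zero _)) (pow_ne_zero _ (X_ne_zero _))

lemma sFold_transfer (m s : ℕ) {U : MvPolynomial ℕ k} :
    U ∈ sFold (pathCoverIdeal k (m+1)) s ↔
      (X (m+4) : MvPolynomial ℕ k) ^ s * X (m+2) ^ s * U ∈
        sFold (pathCoverIdeal k (m+4)) s := by
  rw [mem_sFold_iff, mem_sFold_iff]
  constructor
  · rintro ⟨E, hlen, hmin, rfl⟩
    refine ⟨E.map (· + dd m), by simp [hlen], ?_, ?_⟩
    · intro d hd
      simp only [List.mem_map] at hd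
      obtain ⟨e, he, rfl⟩ := hd
      exact minCov_add m (hmin e he)
    · rw [shift_eq, sum_map_add, hlen]
  · rintro ⟨E, hlen, hmin, hU⟩
    -- each element of E has value 1 at m+4 and m+2
    have hdvd4 : Finsupp.single (m+4) s ≤ E.sum := by
      have : (X (m+4) : MvPolynomial ℕ k) ^ s ∣ monomial E.sum 1 := by
        rw [← hU]; exact ⟨X (m+2) ^ s * U, by ring⟩
      rw [X_pow_eq_monomial, monomial_dvd_monomial_iff] at this
      exact this
    have hdvd2 : Finsupp.single (m+2) s ≤ E.sum := by
      have : (X (m+2) : MvPolynomial ℕ k) ^ s ∣ monomial E.sum 1 := by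
        rw [← hU]; exact ⟨X (m+4) ^ s * U, by ring⟩
      rw [X_pow_eq_monomial, monomial_dvd_monomial_iff] at this
      exact this
    have h4 : ∀ d ∈ E, d (m+4) = 1 := by
      have hle : s ≤ (E.map (fun d => d (m+4))).sum := by
        have := Finsupp.le_def.1 hdvd4 (m+4)
        rw [Finsupp.single_eq_same] at this
        rw [← list_sum_apply]
        exact this
      have := nat_list_all_one (L := E.map (fun d => d (m+4)))
        (by
          intro x hx
          simp only [List.mem_map] at hx
          obtain ⟨d, hd, rfl⟩ := hx
          exact (hmin d hd).le_one _)
        (by simpa [hlen] using hle)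
      intro d hd
      exact this _ (List.mem_map.2 ⟨d, hd, rfl⟩)
    have h2 : ∀ d ∈ E, d (m+2) = 1 := by
      have hle : s ≤ (E.map (fun d => d (m+2))).sum := by
        have := Finsupp.le_def.1 hdvd2 (m+2)
        rw [Finsupp.single_eq_same] at this
        rw [← list_sum_apply]
        exact this
      have := nat_list_all_one (L := E.map (fun d => d (m+2)))
        (by
          intro x hx
          simp only [List.mem_map] at hx
          obtain ⟨d, hd, rfl⟩ := hx
          exact (hmin d hd).le_one _)
        (by simpa [hlen] using hle)
      intro d hd
      exact this _ (List.mem_map.2 ⟨d, hd, rfl⟩)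
    have hdecomp : ∀ d ∈ E, MinCov (m+1) (d - dd m) ∧ d = (d - dd m) + dd m := by
      intro d hd
      obtain ⟨e, hemin, heq⟩ := minCov_decomp m (hmin d hd)
        (by rw [h4 d hd]; omega) (by rw [h2 d hd]; omega)
      have hde : d - dd m = e := by rw [heq]; simp
      constructor
      · rw [hde]; exact hemin
      · rw [hde, ← heq]
    have hmapeq : E = (E.map (· - dd m)).map (· + dd m) := by
      rw [List.map_map]
      conv_lhs => rw [← List.map_id E]
      apply List.map_congr_left
      intro d hd
      exact (hdecomp d hd).2
    refine ⟨E.map (· - dd m), by simp [hlen], ?_, ?_⟩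
    · intro e he
      simp only [List.mem_map] at he
      obtain ⟨d, hd, rfl⟩ := he
      exact (hdecomp d hd).1
    · apply mul_left_cancel₀ (X_pow_mul_ne_zero m s (k := k))
      rw [hU, shift_eq]
      congr 2
      conv_lhs => rw [hmapeq]
      rw [sum_map_add]
      simp [hlen]

lemma nat_list_sum_eq_zero {L : List ℕ} (h : ∀ x ∈ L, x = 0) : L.sum = 0 := by
  induction L with
  | nil => simp
  | cons a t ih =>
    simp only [List.sum_cons]
    rw [h a (by simp), ih (fun x hx => h x (by simp [hx]))]

lemma pathCoverIdeal_eq_span (N : ℕ) :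
    pathCoverIdeal k N =
      Ideal.span ((fun d => (monomial d 1 : MvPolynomial ℕ k)) '' {d | Cov N d}) := by
  apply le_antisymm
  · intro p hp
    rw [mem_ideal_span_monomial_image]
    intro xi hxi
    exact ⟨xi, mem_pathCoverIdeal_iff.1 hp xi hxi, le_refl _⟩
  · rw [Ideal.span_le]
    rintro q ⟨d, hd, rfl⟩
    exact monomial_mem_pathCoverIdeal_iff.2 hd

def SumCovSet (N s : ℕ) : Set (ℕ →₀ ℕ) :=
  {D | ∃ E : List (ℕ →₀ ℕ), E.length = s ∧ (∀ d ∈ E, Cov N d) ∧ E.sum = D}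

lemma pow_eq_span (N s : ℕ) :
    (pathCoverIdeal k N) ^ s =
      Ideal.span ((fun d => (monomial d 1 : MvPolynomial ℕ k)) '' SumCovSet N s) := by
  induction s with
  | zero =>
    have hset : SumCovSet N 0 = {0} := by
      ext D
      constructor
      · rintro ⟨E, hlen, -, rfl⟩
        rw [List.length_eq_zero_iff] at hlen
        subst hlen
        rfl
      · rintro rfl
        exact ⟨[], rfl, by simp, rfl⟩
    rw [pow_zero, hset, Set.image_singleton]
    rw [show (monomial (0 : ℕ →₀ ℕ) (1:k) : MvPolynomial ℕ k) = 1 by simp]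
    rw [Ideal.span_singleton_one, Ideal.one_eq_top]
  | succ s ih =>
    rw [pow_succ', ih, pathCoverIdeal_eq_span, Ideal.span_mul_span']
    congr 1
    ext x
    rw [Set.mem_mul]
    constructor
    · rintro ⟨a, ⟨d, hd, rfl⟩, b, ⟨D, ⟨E, hlen, hcov, rfl⟩, rfl⟩, rfl⟩
      refine ⟨d + E.sum, ⟨d :: E, by simp [hlen], ?_, by simp⟩,
        by rw [monomial_mul, one_mul]⟩
      intro e he
      rcases List.mem_cons.1 he with rfl | he
      · exact hd
      · exact hcov e he
    · rintro ⟨D, ⟨E, hlen, hcov, rfl⟩, rfl⟩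
      rcases E with _ | ⟨a, t⟩
      · simp at hlen
      · refine ⟨monomial a 1, ⟨a, hcov a (by simp), rfl⟩,
          monomial t.sum 1, ⟨t.sum, ⟨t, by simpa using hlen, fun e he => hcov e (by simp [he]), rfl⟩, rfl⟩, ?_⟩
        rw [monomial_mul, one_mul, List.sum_cons]

lemma monomial_mem_pow_iff {N s : ℕ} {D : ℕ →₀ ℕ} :
    (monomial D 1 : MvPolynomial ℕ k) ∈ (pathCoverIdeal k N) ^ s ↔
      ∃ E : List (ℕ →₀ ℕ), E.length = s ∧ (∀ d ∈ E, Cov N d) ∧ E.sum ≤ D := by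
  rw [pow_eq_span, mem_ideal_span_monomial_image]
  constructor
  · intro h
    obtain ⟨si, ⟨E, hlen, hcov, rfl⟩, hle⟩ := h D (by
      rw [mem_support_iff, coeff_monomial, if_pos rfl]; exact one_ne_zero)
    exact ⟨E, hlen, hcov, hle⟩
  · rintro ⟨E, hlen, hcov, hle⟩ xi hxi
    rw [mem_support_iff, coeff_monomial] at hxi
    have hDxi : D = xi := by
      by_contra hne
      rw [if_neg hne] at hxi
      exact hxi rfl
    subst hDxi
    exact ⟨E.sum, ⟨E, hlen, hcov, rfl⟩, hle⟩

lemma minGens_pow_iff {N s : ℕ} {D : ℕ →₀ ℕ} :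
    (monomial D 1 : MvPolynomial ℕ k) ∈ minGens ((pathCoverIdeal k N) ^ s) ↔
      (monomial D 1 : MvPolynomial ℕ k) ∈ (pathCoverIdeal k N) ^ s ∧
      ∀ D', D' ≤ D → (monomial D' 1 : MvPolynomial ℕ k) ∈ (pathCoverIdeal k N) ^ s →
        D' = D := by
  constructor
  · rintro ⟨-, hmem, hmin⟩
    exact ⟨hmem, fun D' hle hmem' =>
      monomial_inj (hmin _ ⟨D', rfl⟩ hmem' (monomial_dvd_monomial_iff.2 hle))⟩
  · rintro ⟨hmem, hmin⟩
    refine ⟨⟨D, rfl⟩, hmem, ?_⟩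
    rintro m' ⟨e, rfl⟩ hm' hdvd
    rw [hmin e (monomial_dvd_monomial_iff.1 hdvd) hm']

lemma cov_add (m : ℕ) {f : ℕ →₀ ℕ} (h : Cov (m+1) f) : Cov (m+4) (f + dd m) := by
  intro i hi
  rw [Finset.mem_Icc] at hi
  rcases Nat.lt_or_ge i (m+1) with hlt | hge
  · rcases h i (by rw [Finset.mem_Icc]; omega) with h' | h'
    · left; simp only [Finsupp.add_apply]; omega
    · right; simp only [Finsupp.add_apply]; omega
  · rcases Nat.lt_or_ge i (m+3) with h2 | h2
    · rcases Nat.eq_or_lt_of_le hge with rfl | h3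
      · right; simp [Finsupp.add_apply, dd_eval2]
      · left
        have : i = m + 2 := by omega
        subst this
        simp [Finsupp.add_apply, dd_eval2]
    · have : i = m + 3 := by omega
      subst this
      right; simp [Finsupp.add_apply, dd_eval4]

noncomputable def trunc (m : ℕ) (f : ℕ →₀ ℕ) : ℕ →₀ ℕ := (f.update (m+2) 0).update (m+4) 0

lemma trunc_apply (m : ℕ) (f : ℕ →₀ ℕ) (j : ℕ) :
    trunc m f j = if j = m+4 then 0 else if j = m+2 then 0 else f j := by
  simp [trunc, Finsupp.coe_update, Function.update_apply]

lemma trunc_apply_of_ne (m : ℕ) (f : ℕ →₀ ℕ) {j : ℕ} (h4 : j ≠ m+4) (h2 : j ≠ m+2) :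
    trunc m f j = f j := by
  rw [trunc_apply, if_neg h4, if_neg h2]

lemma smul_dd_apply (m s j : ℕ) : (s • dd m) j = s * dd m j := by
  rw [Finsupp.smul_apply, smul_eq_mul]

lemma minGens_pow_transfer (m s : ℕ) {E0 : List (ℕ →₀ ℕ)} (hlen : E0.length = s)
    (hmin : ∀ d ∈ E0, MinCov (m+1) d) :
    ((monomial E0.sum 1 : MvPolynomial ℕ k) ∈ minGens ((pathCoverIdeal k (m+1)) ^ s) ↔
      (X (m+4) : MvPolynomial ℕ k) ^ s * X (m+2) ^ s * monomial E0.sum 1 ∈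
        minGens ((pathCoverIdeal k (m+4)) ^ s)) := by
  set D := E0.sum with hD
  have hDsupp : ∀ j, m+1 < j → D j = 0 := by
    intro j hj
    rw [hD, list_sum_apply]
    apply nat_list_sum_eq_zero
    intro x hx
    simp only [List.mem_map] at hx
    obtain ⟨d, hd, rfl⟩ := hx
    exact (hmin d hd).supp (by rw [Finset.mem_Icc]; omega)
  rw [shift_eq]
  set Db := D + s • dd m with hDb
  have hDb_apply : ∀ j, Db j = D j + s * dd m j := by
    intro j
    rw [hDb, Finsupp.add_apply, smul_dd_apply]
  rw [minGens_pow_iff, minGens_pow_iff]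
  have hUmem : (monomial D 1 : MvPolynomial ℕ k) ∈ (pathCoverIdeal k (m+1)) ^ s :=
    monomial_mem_pow_iff.2 ⟨E0, hlen, fun d hd => (hmin d hd).1, le_of_eq hD.symm⟩
  have hBmem : (monomial Db 1 : MvPolynomial ℕ k) ∈ (pathCoverIdeal k (m+4)) ^ s := by
    refine monomial_mem_pow_iff.2 ⟨E0.map (· + dd m), by simp [hlen], ?_, ?_⟩
    · intro d hd
      simp only [List.mem_map] at hd
      obtain ⟨e, he, rfl⟩ := hd
      exact cov_add m (hmin e he).1
    · rw [sum_map_add, hlen, hDb, hD]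
  constructor
  · rintro ⟨-, hminD⟩
    refine ⟨hBmem, ?_⟩
    intro D' hle hmem'
    obtain ⟨F, hFlen, hFcov, hFle⟩ := monomial_mem_pow_iff.1 hmem'
    have hle' := Finsupp.le_def.1 hle
    have hFle' := Finsupp.le_def.1 hFle
    have hDb3 : Db (m+3) = 0 := by
      rw [hDb_apply, dd_eval3, hDsupp (m+3) (by omega)]
      simp
    have hf3 : ∀ f ∈ F, f (m+3) = 0 := by
      have hsum : F.sum (m+3) = 0 := by
        have := hFle' (m+3)
        have := hle' (m+3)
        omega
      rw [list_sum_apply] at hsum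
      intro f hf
      exact nat_list_sum_zero hsum _ (List.mem_map.2 ⟨f, hf, rfl⟩)
    have hf4 : ∀ f ∈ F, 1 ≤ f (m+4) := by
      intro f hf
      rcases hFcov f hf (m+3) (Finset.mem_Icc.2 ⟨by omega, by omega⟩) with h' | h'
      · exact absurd (hf3 f hf) h'
      · rw [show m+4 = m+3+1 from rfl]; omega
    have hf2 : ∀ f ∈ F, 1 ≤ f (m+2) := by
      intro f hf
      rcases hFcov f hf (m+2) (Finset.mem_Icc.2 ⟨by omega, by omega⟩) with h' | h'
      · omega
      · exact absurd (hf3 f hf) h'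
    have hsum4 : s ≤ F.sum (m+4) := by
      rw [list_sum_apply]
      calc s = (F.map (fun f => f (m+4))).length := by simp [hFlen]
      _ ≤ _ := nat_list_length_le_sum (by
          intro x hx
          simp only [List.mem_map] at hx
          obtain ⟨f, hf, rfl⟩ := hx
          exact hf4 f hf)
    have hsum2 : s ≤ F.sum (m+2) := by
      rw [list_sum_apply]
      calc s = (F.map (fun f => f (m+2))).length := by simp [hFlen]
      _ ≤ _ := nat_list_length_le_sum (by
          intro x hx
          simp only [List.mem_map] at hx
          obtain ⟨f, hf, rfl⟩ := hx
          exact hf2 f hf)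
    have hD'4 : D' (m+4) = s := by
      have h1 := hFle' (m+4)
      have h2 := hle' (m+4)
      have h3 := hDb_apply (m+4)
      rw [dd_eval4, hDsupp (m+4) (by omega)] at h3
      omega
    have hD'2 : D' (m+2) = s := by
      have h1 := hFle' (m+2)
      have h2 := hle' (m+2)
      have h3 := hDb_apply (m+2)
      rw [dd_eval2, hDsupp (m+2) (by omega)] at h3
      omega
    have hGmem : (monomial (trunc m D') 1 : MvPolynomial ℕ k) ∈
        (pathCoverIdeal k (m+1)) ^ s := by
      refine monomial_mem_pow_iff.2 ⟨F.map (trunc m), by simp [hFlen], ?_, ?_⟩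
      · intro g hg
        simp only [List.mem_map] at hg
        obtain ⟨f, hf, rfl⟩ := hg
        intro i hi
        rw [Finset.mem_Icc] at hi
        rw [trunc_apply_of_ne m f (by omega) (by omega),
          trunc_apply_of_ne m f (by omega) (by omega)]
        exact hFcov f hf i (Finset.mem_Icc.2 ⟨by omega, by omega⟩)
      · rw [Finsupp.le_def]
        intro j
        rw [list_sum_apply, List.map_map]
        rcases eq_or_ne j (m+4) with rfl | hj4
        · rw [trunc_apply m D' (m+4), if_pos rfl]
          apply le_of_eq
          apply nat_list_sum_eq_zero
          intro x hx
          simp only [List.mem_map, Function.comp] at hx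
          obtain ⟨f, hf, rfl⟩ := hx
          rw [trunc_apply, if_pos rfl]
        rcases eq_or_ne j (m+2) with rfl | hj2
        · rw [trunc_apply m D' (m+2), if_neg (by omega), if_pos rfl]
          apply le_of_eq
          apply nat_list_sum_eq_zero
          intro x hx
          simp only [List.mem_map, Function.comp] at hx
          obtain ⟨f, hf, rfl⟩ := hx
          rw [trunc_apply, if_neg (by omega), if_pos rfl]
        · have hmapeq2 : F.map ((fun d => d j) ∘ trunc m) = F.map (fun d => d j) := by
            apply List.map_congr_left
            intro f hf
            simp only [Function.comp]
            exact trunc_apply_of_ne m f hj4 hj2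
          rw [hmapeq2, trunc_apply_of_ne m D' hj4 hj2, ← list_sum_apply]
          exact hFle' j
    have hGle : trunc m D' ≤ D := by
      rw [Finsupp.le_def]
      intro j
      rcases eq_or_ne j (m+4) with rfl | hj4
      · rw [trunc_apply, if_pos rfl]; omega
      rcases eq_or_ne j (m+2) with rfl | hj2
      · rw [trunc_apply, if_neg hj4, if_pos rfl]; omega
      · rw [trunc_apply_of_ne m D' hj4 hj2]
        have h1 := hle' j
        have h2 := hDb_apply j
        rw [dd_apply, if_neg hj2, if_neg hj4] at h2
        omega
    have hGD := hminD _ hGle hGmem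
    ext j
    rcases eq_or_ne j (m+4) with rfl | hj4
    · rw [hD'4, hDb_apply, dd_eval4, hDsupp (m+4) (by omega)]
      omega
    rcases eq_or_ne j (m+2) with rfl | hj2
    · rw [hD'2, hDb_apply, dd_eval2, hDsupp (m+2) (by omega)]
      omega
    · have h1 := DFunLike.congr_fun hGD j
      rw [trunc_apply_of_ne m D' hj4 hj2] at h1
      rw [h1, hDb_apply, dd_apply, if_neg hj2, if_neg hj4]
      omega
  · rintro ⟨-, hminB⟩
    refine ⟨hUmem, ?_⟩
    intro G hle hmem'
    obtain ⟨F, hFlen, hFcov, hFle⟩ := monomial_mem_pow_iff.1 hmem'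
    have hmem2 : (monomial (G + s • dd m) 1 : MvPolynomial ℕ k) ∈
        (pathCoverIdeal k (m+4)) ^ s := by
      refine monomial_mem_pow_iff.2 ⟨F.map (· + dd m), by simp [hFlen], ?_, ?_⟩
      · intro d hd
        simp only [List.mem_map] at hd
        obtain ⟨f, hf, rfl⟩ := hd
        exact cov_add m (hFcov f hf)
      · rw [sum_map_add, hFlen]
        exact add_le_add hFle (le_refl _)
    have h2 : G + s • dd m ≤ Db := add_le_add hle (le_refl _)
    have h3 := hminB _ h2 hmem2
    have h4 : G + s • dd m = D + s • dd m := by rw [h3, hDb]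
    have := add_right_cancel h4
    rw [this]

-- generic getD lemmas
lemma getD_append_left' {α : Type*} (l l' : List α) (d : α) (i : ℕ) (h : i < l.length) :
    (l ++ l').getD i d = l.getD i d := by
  rw [List.getD_eq_getElem _ _ (by simp; omega), List.getD_eq_getElem _ _ h,
    List.getElem_append_left]

lemma getD_append_right' {α : Type*} (l l' : List α) (d : α) (i : ℕ) (h : i < l'.length) :
    (l ++ l').getD (l.length + i) d = l'.getD i d := by
  rw [List.getD_eq_getElem _ _ (by simp; omega), List.getD_eq_getElem _ _ h]
  rw [List.getElem_append_right (by omega)]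
  congr 1
  omega

lemma getD_map' {α : Type*} (l : List α) (f : α → α) (d : α) (i : ℕ) (h : i < l.length) :
    (l.map f).getD i d = f (l.getD i d) := by
  rw [List.getD_eq_getElem _ _ (by simp; omega), List.getD_eq_getElem _ _ h, List.getElem_map]

lemma rootedList_eq (m : ℕ) : rootedList k (m+4) =
    ((rootedList k (m + 2)).map fun u => X (m + 3) * u) ++
      ((rootedList k (m + 1)).map fun u => X (m + 4) * X (m + 2) * u) := rfl

lemma rootedList_len (m : ℕ) : (rootedList k (m+4)).length
    = (rootedList k (m+2)).length + (rootedList k (m+1)).length := by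
  rw [rootedList_eq]
  simp

lemma rootedList_getD_first (m i : ℕ) (h : i < (rootedList k (m+2)).length) :
    (rootedList k (m+4)).getD i 1 = X (m+3) * ((rootedList k (m+2)).getD i 1) := by
  rw [rootedList_eq, getD_append_left' _ _ _ _ (by rw [List.length_map]; exact h),
    getD_map' _ _ _ _ h]

lemma rootedList_getD_second (m j : ℕ) (h : j < (rootedList k (m+1)).length) :
    (rootedList k (m+4)).getD ((rootedList k (m+2)).length + j) 1
      = X (m+4) * X (m+2) * ((rootedList k (m+1)).getD j 1) := by
  have h1 : ((rootedList k (m+2)).map fun u => (X (m+3) : MvPolynomial ℕ k) * u).length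
      = (rootedList k (m+2)).length := List.length_map _
  rw [rootedList_eq, ← h1, getD_append_right' _ _ _ _ (by rw [List.length_map]; exact h),
    getD_map' _ _ _ _ h]

def shiftFun (r : ℕ) (b : ℕ → ℕ) : ℕ → ℕ := fun i => if i < r then 0 else b (i - r)

lemma shiftFun_lt {r : ℕ} {b : ℕ → ℕ} {i : ℕ} (h : i < r) : shiftFun r b i = 0 := if_pos h

lemma shiftFun_ge {r : ℕ} {b : ℕ → ℕ} {i : ℕ} (h : ¬ i < r) : shiftFun r b i = b (i - r) :=
  if_neg h

lemma shiftFun_add (r : ℕ) (b : ℕ → ℕ) (j : ℕ) : shiftFun r b (r + j) = b j := by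
  rw [shiftFun_ge (by omega)]
  congr 1
  omega

lemma shiftFun_inj {r : ℕ} {a b : ℕ → ℕ} (h : shiftFun r a = shiftFun r b) : a = b := by
  funext j
  have := congrFun h (r + j)
  rwa [shiftFun_add, shiftFun_add] at this

lemma lexGt_shift_iff (r : ℕ) (a b : ℕ → ℕ) :
    lexGt (shiftFun r a) (shiftFun r b) ↔ lexGt a b := by
  constructor
  · rintro ⟨t, hpre, hlt⟩
    have hrt : ¬ t < r := by
      intro h
      rw [shiftFun_lt h, shiftFun_lt h] at hlt
      omega
    refine ⟨t - r, ?_, ?_⟩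
    · intro j hj
      have := hpre (r + j) (by omega)
      rwa [shiftFun_add, shiftFun_add] at this
    · rwa [shiftFun_ge hrt, shiftFun_ge hrt] at hlt
  · rintro ⟨t, hpre, hlt⟩
    refine ⟨r + t, ?_, ?_⟩
    · intro j hj
      by_cases hjr : j < r
      · rw [shiftFun_lt hjr, shiftFun_lt hjr]
      · rw [shiftFun_ge hjr, shiftFun_ge hjr]
        exact hpre (j - r) (by omega)
    · rw [shiftFun_add, shiftFun_add]
      exact hlt

lemma exprOn_shift (m s : ℕ) {E : ℕ →₀ ℕ} (hE : ∀ j, m+1 < j → E j = 0) (a : ℕ → ℕ) :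
    IsExprOn (rootedList k (m+4)) s a
        ((X (m+4) : MvPolynomial ℕ k) ^ s * X (m+2) ^ s * monomial E 1) ↔
      ∃ b, IsExprOn (rootedList k (m+1)) s b (monomial E 1) ∧
        a = shiftFun (rootedList k (m+2)).length b := by
  set r := (rootedList k (m+2)).length with hr
  set t := (rootedList k (m+1)).length with ht
  have hlen : (rootedList k (m+4)).length = r + t := rootedList_len m
  have hsplit : ∀ (c : ℕ → ℕ),
      (∏ i ∈ Finset.range (r + t), ((rootedList k (m+4)).getD i 1) ^ c i)
        = (∏ i ∈ Finset.range r, ((rootedList k (m+4)).getD i 1) ^ c i) *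
          ((X (m+4) : MvPolynomial ℕ k) ^ (∑ j ∈ Finset.range t, c (r + j)) *
            X (m+2) ^ (∑ j ∈ Finset.range t, c (r + j)) *
            ∏ j ∈ Finset.range t, ((rootedList k (m+1)).getD j 1) ^ c (r + j)) := by
    intro c
    rw [Finset.prod_range_add]
    congr 1
    have hcong : ∀ j ∈ Finset.range t, ((rootedList k (m+4)).getD (r + j) 1) ^ c (r + j)
        = ((X (m+4) : MvPolynomial ℕ k) * X (m+2)) ^ c (r+j) *
          ((rootedList k (m+1)).getD j 1) ^ c (r+j) := by
      intro j hj
      rw [rootedList_getD_second m j (Finset.mem_range.1 hj), mul_pow]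
    rw [Finset.prod_congr rfl hcong, Finset.prod_mul_distrib, Finset.prod_pow_eq_pow_sum,
      mul_pow]
  constructor
  · rintro ⟨hz, hsum, hprod⟩
    rw [hlen] at hz hsum hprod
    have hfirst : ∀ i, i < r → a i = 0 := by
      intro i hi
      by_contra hne
      have hdvd : (X (m+3) : MvPolynomial ℕ k) ∣
          X (m+4) ^ s * X (m+2) ^ s * monomial E 1 := by
        rw [hprod]
        have hmemr : i ∈ Finset.range (r + t) := Finset.mem_range.2 (by omega)
        refine Dvd.dvd.trans ?_ (Finset.dvd_prod_of_mem _ hmemr)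
        refine dvd_pow ?_ hne
        rw [rootedList_getD_first m i hi]
        exact dvd_mul_right _ _
      rw [shift_eq,
        show (X (m+3) : MvPolynomial ℕ k) = monomial (Finsupp.single (m+3) 1) 1 by
          rw [← X_pow_eq_monomial, pow_one],
        monomial_dvd_monomial_iff] at hdvd
      have := Finsupp.le_def.1 hdvd (m+3)
      rw [Finsupp.single_eq_same, Finsupp.add_apply, smul_dd_apply, dd_eval3,
        hE (m+3) (by omega)] at this
      omega
    have hzero : ∑ i ∈ Finset.range r, a i = 0 :=
      Finset.sum_eq_zero (fun i hi => hfirst i (Finset.mem_range.1 hi))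
    have hsum2 : ∑ j ∈ Finset.range t, a (r + j) = s := by
      rw [Finset.sum_range_add] at hsum
      omega
    refine ⟨fun j => a (r + j), ⟨?_, ?_, ?_⟩, ?_⟩
    · intro j hj
      exact hz (r + j) (by omega)
    · exact hsum2
    · rw [hsplit a] at hprod
      have h1 : (∏ i ∈ Finset.range r, ((rootedList k (m+4)).getD i 1) ^ a i) = 1 :=
        Finset.prod_eq_one (fun i hi => by rw [hfirst i (Finset.mem_range.1 hi), pow_zero])
      rw [h1, one_mul, hsum2] at hprod
      exact mul_left_cancel₀ (X_pow_mul_ne_zero m s (k := k)) hprod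
    · funext i
      by_cases hir : i < r
      · rw [shiftFun_lt hir, hfirst i hir]
      · rw [shiftFun_ge hir]
        congr 1
        omega
  · rintro ⟨b, ⟨hz, hsum, hprod⟩, rfl⟩
    have hc : ∀ j ∈ Finset.range t, shiftFun r b (r + j) = b j := fun j _ => shiftFun_add r b j
    refine ⟨?_, ?_, ?_⟩
    · intro i hi
      rw [hlen] at hi
      rw [shiftFun_ge (by omega)]
      exact hz _ (by omega)
    · rw [hlen, Finset.sum_range_add]
      have h0 : ∑ i ∈ Finset.range r, shiftFun r b i = 0 :=
        Finset.sum_eq_zero (fun i hi => shiftFun_lt (Finset.mem_range.1 hi))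
      rw [h0, zero_add, Finset.sum_congr rfl hc, hsum]
    · rw [hlen, hsplit (shiftFun r b)]
      have h1 : (∏ i ∈ Finset.range r, ((rootedList k (m+4)).getD i 1) ^ shiftFun r b i) = 1 :=
        Finset.prod_eq_one (fun i hi => by
          rw [shiftFun_lt (Finset.mem_range.1 hi), pow_zero])
      rw [h1, one_mul, Finset.sum_congr rfl hc, hsum,
        Finset.prod_congr rfl (fun j hj => by rw [hc j hj]), ← hprod]

lemma isMaxExpr_shift_iff (m s : ℕ) {E : ℕ →₀ ℕ} (hE : ∀ j, m+1 < j → E j = 0) (b : ℕ → ℕ) :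
    IsMaxExpr (rootedList k (m+1)) s b (monomial E 1) ↔
      IsMaxExpr (rootedList k (m+4)) s (shiftFun (rootedList k (m+2)).length b)
        ((X (m+4) : MvPolynomial ℕ k) ^ s * X (m+2) ^ s * monomial E 1) := by
  set r := (rootedList k (m+2)).length with hr
  constructor
  · rintro ⟨hexpr, hmax⟩
    refine ⟨(exprOn_shift m s hE _).2 ⟨b, hexpr, rfl⟩, ?_⟩
    intro c hc hne
    obtain ⟨b', hb', rfl⟩ := (exprOn_shift m s hE c).1 hc
    have hbne : b' ≠ b := fun h => hne (by rw [h])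
    exact (lexGt_shift_iff r b b').2 (hmax b' hb' hbne)
  · rintro ⟨hexpr, hmax⟩
    obtain ⟨b'', hb'', heq⟩ := (exprOn_shift m s hE _).1 hexpr
    have : b'' = b := shiftFun_inj heq.symm
    subst this
    refine ⟨hb'', ?_⟩
    intro c hcexpr hne
    have hs : shiftFun r c ≠ shiftFun r b'' := fun h => hne (shiftFun_inj h)
    have := hmax (shiftFun r c) ((exprOn_shift m s hE _).2 ⟨c, hcexpr, rfl⟩) hs
    exact (lexGt_shift_iff r b'' c).1 this

lemma rootedGt_shift_iff (m s : ℕ) {E F : ℕ →₀ ℕ}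
    (hE : ∀ j, m+1 < j → E j = 0) (hF : ∀ j, m+1 < j → F j = 0) :
    rootedGt (rootedList k (m+1)) s (monomial E 1) (monomial F 1) ↔
      rootedGt (rootedList k (m+4)) s
        ((X (m+4) : MvPolynomial ℕ k) ^ s * X (m+2) ^ s * monomial E 1)
        ((X (m+4) : MvPolynomial ℕ k) ^ s * X (m+2) ^ s * monomial F 1) := by
  set r := (rootedList k (m+2)).length with hr
  constructor
  · rintro ⟨a, b, ha, hb, hab⟩
    exact ⟨shiftFun r a, shiftFun r b, (isMaxExpr_shift_iff m s hE a).1 ha,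
      (isMaxExpr_shift_iff m s hF b).1 hb, (lexGt_shift_iff r a b).2 hab⟩
  · rintro ⟨a', b', ha', hb', hab⟩
    obtain ⟨a, haexpr, rfl⟩ := (exprOn_shift m s hE a').1 ha'.1
    obtain ⟨b, hbexpr, rfl⟩ := (exprOn_shift m s hF b').1 hb'.1
    exact ⟨a, b, (isMaxExpr_shift_iff m s hE a).2 ha',
      (isMaxExpr_shift_iff m s hF b).2 hb', (lexGt_shift_iff r a b).1 hab⟩

lemma minCov_list_sum_supp (m : ℕ) {E0 : List (ℕ →₀ ℕ)} (hmin : ∀ d ∈ E0, MinCov (m+1) d) :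
    ∀ j, m+1 < j → E0.sum j = 0 := by
  intro j hj
  rw [list_sum_apply]
  apply nat_list_sum_eq_zero
  intro x hx
  simp only [List.mem_map] at hx
  obtain ⟨d, hd, rfl⟩ := hx
  exact (hmin d hd).supp (by rw [Finset.mem_Icc]; omega)

end PureSFold

/-- (Pure s-fold products divisible by `x_n^s`.) For `n ≥ 4` and
`s ≥ 1`: `U, V ∈ F(J(P_{n-3})^s)` iff `x_n^s x_{n-2}^s U, x_n^s x_{n-2}^s V ∈ F(J(P_n)^s)`;
and in that case (1) `U >_R V` iff `x_n^s x_{n-2}^s U >_R x_n^s x_{n-2}^s V`, and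
(2) `U ∈ G(J(P_{n-3})^s)` iff `x_n^s x_{n-2}^s U ∈ G(J(P_n)^s)`. -/
theorem pure_sFold_xn (k : Type*) [Field k] (n s : ℕ) (hn : 4 ≤ n) (hs : 1 ≤ s)
    (U V : MvPolynomial ℕ k) :
    ((U ∈ sFold (pathCoverIdeal k (n - 3)) s ∧ V ∈ sFold (pathCoverIdeal k (n - 3)) s) ↔
      ((X n : MvPolynomial ℕ k) ^ s * (X (n - 2)) ^ s * U ∈ sFold (pathCoverIdeal k n) s ∧
        (X n : MvPolynomial ℕ k) ^ s * (X (n - 2)) ^ s * V ∈ sFold (pathCoverIdeal k n) s)) ∧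
    (U ∈ sFold (pathCoverIdeal k (n - 3)) s → V ∈ sFold (pathCoverIdeal k (n - 3)) s →
      ((rootedGt (rootedList k (n - 3)) s U V ↔
          rootedGt (rootedList k n) s
            ((X n : MvPolynomial ℕ k) ^ s * (X (n - 2)) ^ s * U)
            ((X n : MvPolynomial ℕ k) ^ s * (X (n - 2)) ^ s * V)) ∧
       (U ∈ minGens ((pathCoverIdeal k (n - 3)) ^ s) ↔
          (X n : MvPolynomial ℕ k) ^ s * (X (n - 2)) ^ s * U ∈
            minGens ((pathCoverIdeal k n) ^ s)))) := by
  obtain ⟨m, rfl⟩ : ∃ m, n = m + 4 := ⟨n - 4, by omega⟩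
  have h3 : m + 4 - 3 = m + 1 := by omega
  have h2 : m + 4 - 2 = m + 2 := by omega
  rw [h3, h2]
  constructor
  · exact and_congr (PureSFold.sFold_transfer m s) (PureSFold.sFold_transfer m s)
  · intro hU hV
    obtain ⟨EU, hEUlen, hEUmin, hUeq⟩ := PureSFold.mem_sFold_iff.1 hU
    obtain ⟨EV, hEVlen, hEVmin, hVeq⟩ := PureSFold.mem_sFold_iff.1 hV
    subst hUeq
    subst hVeq
    constructor
    · exact PureSFold.rootedGt_shift_iff m s (PureSFold.minCov_list_sum_supp m hEUmin)
        (PureSFold.minCov_list_sum_supp m hEVmin)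
    · exact PureSFold.minGens_pow_transfer m s hEUlen hEUmin
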